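/- Let g be an R-module automorphism of V satisfying ω(g u, g v) = ω(u, v) for all u, v ∈ V. Then there exists a function α : V → R satisfying α(v₁ + v₂) − α(v₁) − α(v₂) = β(g v₁, g v₂) − β(v₁, v₂) for all v₁, v₂ ∈ V. (This says that the affine symplectic group ASp(V) surjects onto the symplectic group Sp(V), i.e. the sequence 0 → V^∨ → ASp(V) → Sp(V) → 1 is exact on the right; it contrasts with Weil's pseudo-symplectic group, which surjects only onto an orthogonal subgroup.) -/

import Mathlib

/-- The Galois ring `R = (ℤ/4ℤ)[X]/(f)`. -/
abbrev GR (f : Polynomial (ZMod 4)) : Type :=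
  Polynomial (ZMod 4) ⧸ Ideal.span {f}

/-- The free symplectic module `Ṽ = R^n × R^n`. -/
abbrev Vt (f : Polynomial (ZMod 4)) (n : ℕ) : Type :=
  (Fin n → GR f) × (Fin n → GR f)

/-- The bilinear form `β̃((l,m),(l',m')) = ∑ lᵢ·m'ᵢ` on `Ṽ`. -/
noncomputable def betaT (f : Polynomial (ZMod 4)) (n : ℕ) (u v : Vt f n) : GR f :=
  ∑ i, u.1 i * v.2 i

/-- The submodule `2Ṽ ⊆ Ṽ`. -/
noncomputable def twoSub (f : Polynomial (ZMod 4)) (n : ℕ) : Submodule (GR f) (Vt f n) :=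
  LinearMap.range (LinearMap.lsmul (GR f) (Vt f n) (2 : GR f))

/-- The quotient `V = Ṽ/2Ṽ`. -/
abbrev VQ (f : Polynomial (ZMod 4)) (n : ℕ) : Type :=
  Vt f n ⧸ twoSub f n

open scoped symmDiff

section Combinatorics

variable {ι R : Type*} [LinearOrder ι] [CommRing R]

/-- The "quadratic form" attached to a finite set of basis indices. -/
noncomputable def qAux (Bb : ι → ι → R) (a : ι → R) (S : Finset ι) : R :=
  ∑ i ∈ S, (a i + ∑ j ∈ S.filter (· < i), Bb i j)

lemma qAux_insert (Bb : ι → ι → R) (a : ι → R)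
    (hsym : ∀ i j, Bb i j = Bb j i) {t : ι} {W : Finset ι} (ht : t ∉ W) :
    qAux Bb a (insert t W) = qAux Bb a W + a t + ∑ j ∈ W, Bb t j := by
  rw [qAux, Finset.sum_insert ht]
  have h1 : (insert t W).filter (· < t) = W.filter (· < t) := by
    rw [Finset.filter_insert]
    simp
  have h2 : ∀ i ∈ W,
      (a i + ∑ j ∈ (insert t W).filter (· < i), Bb i j)
        = (a i + ∑ j ∈ W.filter (· < i), Bb i j) + (if t < i then Bb i t else 0) := by
    intro i hi
    rw [Finset.filter_insert]
    by_cases hti : t < i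
    · rw [if_pos hti, if_pos hti, Finset.sum_insert (by simp [ht])]
      ring
    · rw [if_neg hti, if_neg hti, add_zero]
  rw [Finset.sum_congr rfl h2, Finset.sum_add_distrib, ← Finset.sum_filter]
  have h3 : ∑ j ∈ W, Bb t j
      = ∑ j ∈ W.filter (· < t), Bb t j + ∑ j ∈ W.filter (fun j => ¬ j < t), Bb t j :=
    (Finset.sum_filter_add_sum_filter_not W _ _).symm
  have h4 : W.filter (fun j => ¬ j < t) = W.filter (fun j => t < j) := by
    apply Finset.filter_congr
    intro j hj
    constructor
    · intro h
      rcases lt_or_eq_of_le (not_lt.mp h) with h' | h'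
      · simpa using h'
      · exact absurd (h' ▸ hj) ht
    · intro h
      exact not_lt.mpr h.le
  have h5 : ∑ i ∈ W.filter (fun i => t < i), Bb i t
      = ∑ i ∈ W.filter (fun i => t < i), Bb t i :=
    Finset.sum_congr rfl fun i _ => hsym i t
  rw [h3, h4, h5, h1, qAux]
  ring

lemma qAux_erase (Bb : ι → ι → R) (a : ι → R)
    (hsym : ∀ i j, Bb i j = Bb j i)
    (htor : ∀ i j, Bb i j + Bb i j = 0)
    (hdiag : ∀ i, Bb i i = a i + a i)
    {t : ι} {W : Finset ι} (ht : t ∈ W) :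
    qAux Bb a (W.erase t) = qAux Bb a W + a t + ∑ j ∈ W, Bb t j := by
  have hins : insert t (W.erase t) = W := Finset.insert_erase ht
  have eq1 : qAux Bb a W
      = qAux Bb a (W.erase t) + a t + ∑ j ∈ W.erase t, Bb t j := by
    have := qAux_insert Bb a hsym (Finset.notMem_erase t W)
    rwa [hins] at this
  have hsum : ∑ j ∈ W, Bb t j = Bb t t + ∑ j ∈ W.erase t, Bb t j :=
    (Finset.add_sum_erase W _ ht).symm
  have hsum2 : (∑ j ∈ W.erase t, Bb t j) + (∑ j ∈ W.erase t, Bb t j) = 0 := by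
    rw [← Finset.sum_add_distrib]
    exact Finset.sum_eq_zero fun j _ => htor t j
  rw [hsum]
  linear_combination -eq1 + hdiag t - htor t t - hsum2

lemma symmDiff_singleton_of_not_mem {t : ι} {W : Finset ι} (ht : t ∉ W) :
    W ∆ {t} = insert t W := by
  ext x
  simp only [Finset.mem_symmDiff, Finset.mem_singleton, Finset.mem_insert]
  by_cases hx : x = t
  · subst hx; simp [ht]
  · simp [hx]

lemma symmDiff_singleton_of_mem {t : ι} {W : Finset ι} (ht : t ∈ W) :
    W ∆ {t} = W.erase t := by
  ext x
  simp only [Finset.mem_symmDiff, Finset.mem_singleton, Finset.mem_erase]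
  by_cases hx : x = t
  · subst hx; simp [ht]
  · simp [hx]

lemma qAux_symmDiff_singleton (Bb : ι → ι → R) (a : ι → R)
    (hsym : ∀ i j, Bb i j = Bb j i)
    (htor : ∀ i j, Bb i j + Bb i j = 0)
    (hdiag : ∀ i, Bb i i = a i + a i)
    (t : ι) (W : Finset ι) :
    qAux Bb a (W ∆ {t}) = qAux Bb a W + a t + ∑ j ∈ W, Bb t j := by
  by_cases ht : t ∈ W
  · rw [symmDiff_singleton_of_mem ht]
    exact qAux_erase Bb a hsym htor hdiag ht
  · rw [symmDiff_singleton_of_not_mem ht]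
    exact qAux_insert Bb a hsym ht

lemma symmDiff_empty' (S : Finset ι) : S ∆ (∅ : Finset ι) = S := by
  ext x
  simp [Finset.mem_symmDiff]

lemma sum_symmDiff_singleton (x : ι → R) (hx : ∀ i, x i + x i = 0)
    (t : ι) (W : Finset ι) :
    ∑ i ∈ W ∆ {t}, x i = (∑ i ∈ W, x i) + x t := by
  by_cases ht : t ∈ W
  · rw [symmDiff_singleton_of_mem ht]
    have h := (Finset.add_sum_erase W x ht).symm
    linear_combination -h - hx t
  · rw [symmDiff_singleton_of_not_mem ht, Finset.sum_insert ht]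
    ring

lemma sum_symmDiff_of_torsion (x : ι → R) (hx : ∀ i, x i + x i = 0)
    (S T : Finset ι) :
    ∑ i ∈ S ∆ T, x i = (∑ i ∈ S, x i) + ∑ i ∈ T, x i := by
  induction T using Finset.induction_on with
  | empty => simp [symmDiff_empty' S]
  | @insert t T htT ih =>
      have h1 : (insert t T : Finset ι) = T ∆ {t} :=
        (symmDiff_singleton_of_not_mem htT).symm
      rw [h1, ← symmDiff_assoc, sum_symmDiff_singleton x hx,
        sum_symmDiff_singleton x hx, ih]
      ring

lemma qAux_core (Bb : ι → ι → R) (a : ι → R)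
    (hsym : ∀ i j, Bb i j = Bb j i)
    (htor : ∀ i j, Bb i j + Bb i j = 0)
    (hdiag : ∀ i, Bb i i = a i + a i)
    (S T : Finset ι) :
    qAux Bb a (S ∆ T) = qAux Bb a S + qAux Bb a T + ∑ i ∈ S, ∑ j ∈ T, Bb i j := by
  induction T using Finset.induction_on with
  | empty => simp [symmDiff_empty' S, qAux]
  | @insert t T htT ih =>
      have h1 : (insert t T : Finset ι) = T ∆ {t} :=
        (symmDiff_singleton_of_not_mem htT).symm
      have hrow : ∀ i, Bb t i + Bb t i = 0 := fun i => htor t i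
      have hE : ∑ i ∈ S, ∑ j ∈ insert t T, Bb i j
          = (∑ i ∈ S, ∑ j ∈ T, Bb i j) + ∑ i ∈ S, Bb t i := by
        rw [← Finset.sum_add_distrib]
        refine Finset.sum_congr rfl fun i _ => ?_
        rw [Finset.sum_insert htT, hsym i t]
        ring
      rw [hE, h1, ← symmDiff_assoc,
        qAux_symmDiff_singleton Bb a hsym htor hdiag,
        qAux_symmDiff_singleton Bb a hsym htor hdiag,
        sum_symmDiff_of_torsion _ hrow, ih]
      ring

end Combinatorics

section QuadRefine

/-- Every symmetric biadditive form on an elementary abelian 2-group whose values are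
"halvable" admits a quadratic refinement. -/
lemma quad_refine {V R : Type*} [AddCommGroup V] [CommRing R]
    (B : V → V → R)
    (hBl : ∀ u v w : V, B (u + v) w = B u w + B v w)
    (hBr : ∀ u v w : V, B u (v + w) = B u v + B u w)
    (hBs : ∀ u v : V, B u v = B v u)
    (htorV : ∀ v : V, v + v = 0)
    (hdiag : ∀ v : V, ∃ a : R, B v v = a + a) :
    ∃ α : V → R, ∀ u v : V, α (u + v) - α u - α v = B u v := by
  have hB0 : ∀ w : V, B 0 w = 0 := by
    intro w
    have h := hBl 0 0 w
    rw [add_zero] at h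
    linear_combination -h
  have hB0r : ∀ w : V, B w 0 = 0 := fun w => (hBs w 0).trans (hB0 w)
  have htorB : ∀ u v : V, B u v + B u v = 0 := by
    intro u v
    have h := hBl u u v
    rw [htorV u, hB0 v] at h
    linear_combination -h
  have hsmul : ∀ v : V, (2 : ℕ) • v = 0 := fun v => by rw [two_nsmul]; exact htorV v
  letI : Module (ZMod 2) V := AddCommGroup.zmodModule hsmul
  letI : LinearOrder (Module.Basis.ofVectorSpaceIndex (ZMod 2) V) :=
    IsWellOrder.linearOrder WellOrderingRel
  set b := Module.Basis.ofVectorSpace (ZMod 2) V with hb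
  have hcoef : ∀ c : ZMod 2, c ≠ 0 → c = 1 := by decide
  have hexp : ∀ v : V, ∑ i ∈ (b.repr v).support, b i = v := by
    intro v
    have h := b.linearCombination_repr v
    rw [Finsupp.linearCombination_apply, Finsupp.sum] at h
    conv_rhs => rw [← h]
    refine Finset.sum_congr rfl fun i hi => ?_
    exact (by rw [hcoef _ (Finsupp.mem_support_iff.mp hi), one_smul] :
      (b.repr v) i • b i = b i).symm
  have hBsum : ∀ (S : Finset _) (w : V), B (∑ i ∈ S, b i) w = ∑ i ∈ S, B (b i) w := by
    intro S w
    induction S using Finset.induction_on with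
    | empty => simpa using hB0 w
    | @insert t S ht ih => rw [Finset.sum_insert ht, Finset.sum_insert ht, hBl, ih]
  have hBsum2 : ∀ (u : V) (T : Finset _), B u (∑ j ∈ T, b j) = ∑ j ∈ T, B u (b j) := by
    intro u T
    induction T using Finset.induction_on with
    | empty => simpa using hB0r u
    | @insert t T ht ih => rw [Finset.sum_insert ht, Finset.sum_insert ht, hBr, ih]
  choose a ha using fun i => hdiag (b i)
  refine ⟨fun v => qAux (fun i j => B (b i) (b j)) a (b.repr v).support, ?_⟩
  intro u v
  dsimp only
  have hsupp : (b.repr (u + v)).support = (b.repr u).support ∆ (b.repr v).support := by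
    rw [map_add]
    ext i
    simp only [Finsupp.mem_support_iff, Finset.mem_symmDiff, Finsupp.add_apply]
    generalize b.repr u i = x
    generalize b.repr v i = y
    revert x y
    decide
  have hu := hexp u
  have hv := hexp v
  set S := (b.repr u).support with hS
  set T := (b.repr v).support with hT
  have hBuv : B u v = ∑ i ∈ S, ∑ j ∈ T, B (b i) (b j) := by
    conv_lhs => rw [← hu, ← hv]
    rw [hBsum]
    exact Finset.sum_congr rfl fun i _ => hBsum2 (b i) T
  rw [hsupp, qAux_core _ a (fun i j => hBs (b i) (b j)) (fun i j => htorB (b i) (b j)) ha,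
    hBuv]
  ring

end QuadRefine

/-- For every `R`-module automorphism `g` of `V` preserving the symplectic
form `ω`, there exists `α : V → R` with
`α(v₁+v₂) - α(v₁) - α(v₂) = β(g v₁, g v₂) - β(v₁, v₂)`:  the affine symplectic group
`ASp(V)` surjects onto `Sp(V)`. -/
theorem stmt_18
    (d : ℕ) (hd : 1 ≤ d)
    (f : Polynomial (ZMod 4)) (hmonic : f.Monic) (hdeg : f.natDegree = d)
    (hirr : Irreducible (f.map (ZMod.castHom (show (2:ℕ) ∣ 4 by norm_num) (ZMod 2))))
    (n : ℕ) (hn : 1 ≤ n)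
    (β : VQ f n → VQ f n → GR f)
    (hβ : ∀ u v : Vt f n,
      β (Submodule.Quotient.mk u) (Submodule.Quotient.mk v) = 2 * betaT f n u v)
    (g : VQ f n ≃ₗ[GR f] VQ f n)
    (hg : ∀ u v : VQ f n, β (g u) (g v) - β (g v) (g u) = β u v - β v u) :
    ∃ α : VQ f n → GR f, ∀ v₁ v₂ : VQ f n,
      α (v₁ + v₂) - α v₁ - α v₂ = β (g v₁) (g v₂) - β v₁ v₂ := by
  have hsurj := Submodule.Quotient.mk_surjective (twoSub f n)
  have htorV : ∀ v : VQ f n, v + v = 0 := by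
    intro v
    obtain ⟨u, rfl⟩ := hsurj v
    have hmem : u + u ∈ twoSub f n := ⟨u, by rw [LinearMap.lsmul_apply, two_smul]⟩
    rw [← Submodule.Quotient.mk_add, Submodule.Quotient.mk_eq_zero]
    exact hmem
  have hβl : ∀ u v w : VQ f n, β (u + v) w = β u w + β v w := by
    intro u v w
    obtain ⟨p, rfl⟩ := hsurj u
    obtain ⟨q, rfl⟩ := hsurj v
    obtain ⟨r, rfl⟩ := hsurj w
    rw [← Submodule.Quotient.mk_add, hβ, hβ, hβ]
    have h : betaT f n (p + q) r = betaT f n p r + betaT f n q r := by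
      simp [betaT, add_mul, Finset.sum_add_distrib]
    rw [h]; ring
  have hβr : ∀ u v w : VQ f n, β u (v + w) = β u v + β u w := by
    intro u v w
    obtain ⟨p, rfl⟩ := hsurj u
    obtain ⟨q, rfl⟩ := hsurj v
    obtain ⟨r, rfl⟩ := hsurj w
    rw [← Submodule.Quotient.mk_add, hβ, hβ, hβ]
    have h : betaT f n p (q + r) = betaT f n p q + betaT f n p r := by
      simp [betaT, mul_add, Finset.sum_add_distrib]
    rw [h]; ring
  set B : VQ f n → VQ f n → GR f := fun u v => β (g u) (g v) - β u v with hB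
  have hBl : ∀ u v w : VQ f n, B (u + v) w = B u w + B v w := by
    intro u v w
    simp only [hB, map_add, hβl]
    ring
  have hBr : ∀ u v w : VQ f n, B u (v + w) = B u v + B u w := by
    intro u v w
    simp only [hB, map_add, hβr]
    ring
  have hBs : ∀ u v : VQ f n, B u v = B v u := by
    intro u v
    simp only [hB]
    linear_combination hg u v
  have hdiag : ∀ v : VQ f n, ∃ a : GR f, B v v = a + a := by
    intro v
    obtain ⟨p, hp⟩ := hsurj (g v)
    obtain ⟨q, hq⟩ := hsurj v
    refine ⟨betaT f n p p - betaT f n q q, ?_⟩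
    simp only [hB]
    rw [← hp, ← hq, hβ, hβ]
    ring
  obtain ⟨α, hα⟩ := quad_refine B hBl hBr hBs htorV hdiag
  exact ⟨α, hα⟩
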